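/- Along solutions of the full matrix flow W' = [W,Ψ] + [Ξ,ΔΞ] + 2[Q,Ψ] + 2[Ξ,P] (with W = ΔΨ), P' = [P,Ψ] + [Ξ,Q] + 2[Ψ,Ξ], Q' = [Q,Ψ] + [Ξ,P], Ξ' = [Ξ,Ψ], the cross-helicity I = tr(Ξ W - P Q) is conserved, assuming Δ is symmetric with respect to the trace form (tr((ΔA)B) = tr(A(ΔB))). -/

import Mathlib

open Matrix

attribute [local instance] Matrix.normedAddCommGroup Matrix.normedSpace

private lemma hasDerivAt_entry {N : ℕ} {f : ℝ → Matrix (Fin N) (Fin N) ℂ}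
    {f' : Matrix (Fin N) (Fin N) ℂ} {t : ℝ} (hf : HasDerivAt f f' t) (i j : Fin N) :
    HasDerivAt (fun s => f s i j) (f' i j) t := by
  exact ((Matrix.entryLinearMap ℝ ℂ i j).toContinuousLinearMap.hasFDerivAt).comp_hasDerivAt t hf

private lemma hasDerivAt_trace_mul {N : ℕ} {f g : ℝ → Matrix (Fin N) (Fin N) ℂ}
    {f' g' : Matrix (Fin N) (Fin N) ℂ} {t : ℝ}
    (hf : HasDerivAt f f' t) (hg : HasDerivAt g g' t) :
    HasDerivAt (fun s => (f s * g s).trace)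
      ((f' * g t).trace + (f t * g').trace) t := by
  have key : HasDerivAt (fun s => ∑ i, ∑ j, f s i j * g s j i)
      (∑ i, ∑ j, (f' i j * g t j i + f t i j * g' j i)) t := by
    apply HasDerivAt.fun_sum
    intro i _
    apply HasDerivAt.fun_sum
    intro j _
    exact (hasDerivAt_entry hf i j).mul (hasDerivAt_entry hg j i)
  have e1 : ∀ s, (f s * g s).trace = ∑ i, ∑ j, f s i j * g s j i := by
    intro s; simp [Matrix.trace, Matrix.mul_apply, Matrix.diag]
  have e2 : (f' * g t).trace + (f t * g').trace
      = ∑ i, ∑ j, (f' i j * g t j i + f t i j * g' j i) := by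
    simp [Matrix.trace, Matrix.mul_apply, Matrix.diag, Finset.sum_add_distrib]
  rw [e2]; exact key.congr_deriv rfl |>.congr_of_eventuallyEq (by filter_upwards with s using (e1 s))

/-- Along solutions of the full matrix flow with `W = ΔΨ`,
`W' = [W,Ψ] + [Ξ,ΔΞ] + 2[Q,Ψ] + 2[Ξ,P]`, `P' = [P,Ψ] + [Ξ,Q] + 2[Ψ,Ξ]`,
`Q' = [Q,Ψ] + [Ξ,P]`, `Ξ' = [Ξ,Ψ]`, the cross-helicity `tr(ΞW - PQ)` is
conserved, where `Δ` is invertible and symmetric for the trace form. -/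
theorem stmt8 {N : ℕ}
    (Δ : Matrix (Fin N) (Fin N) ℂ ≃ₗ[ℂ] Matrix (Fin N) (Fin N) ℂ)
    (hΔ : ∀ A B : Matrix (Fin N) (Fin N) ℂ,
      ((Δ A) * B).trace = (A * (Δ B)).trace)
    (Ψ P Q Ξ : ℝ → Matrix (Fin N) (Fin N) ℂ)
    (hsu : ∀ t, (Ψ t)ᴴ = -Ψ t ∧ (P t)ᴴ = -P t ∧ (Q t)ᴴ = -Q t ∧ (Ξ t)ᴴ = -Ξ t)
    (htr : ∀ t, (Ψ t).trace = 0 ∧ (P t).trace = 0 ∧ (Q t).trace = 0 ∧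
      (Ξ t).trace = 0)
    (hW : ∀ t, HasDerivAt (fun s => Δ (Ψ s))
      (⁅Δ (Ψ t), Ψ t⁆ + ⁅Ξ t, Δ (Ξ t)⁆ + 2 • ⁅Q t, Ψ t⁆ + 2 • ⁅Ξ t, P t⁆) t)
    (hP : ∀ t, HasDerivAt P (⁅P t, Ψ t⁆ + ⁅Ξ t, Q t⁆ + 2 • ⁅Ψ t, Ξ t⁆) t)
    (hQ : ∀ t, HasDerivAt Q (⁅Q t, Ψ t⁆ + ⁅Ξ t, P t⁆) t)
    (hΞ : ∀ t, HasDerivAt Ξ ⁅Ξ t, Ψ t⁆ t) :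
    ∀ t, (Ξ t * Δ (Ψ t) - P t * Q t).trace =
      (Ξ 0 * Δ (Ψ 0) - P 0 * Q 0).trace := by
  have key : ∀ u : ℝ, HasDerivAt
      (fun s => (Ξ s * Δ (Ψ s) - P s * Q s).trace) 0 u := by
    intro u
    have h1 := hasDerivAt_trace_mul (hΞ u) (hW u)
    have h2 := hasDerivAt_trace_mul (hP u) (hQ u)
    have h3 := h1.fun_sub h2
    have heq : (fun s => (Ξ s * Δ (Ψ s)).trace - (P s * Q s).trace)
        = (fun s => (Ξ s * Δ (Ψ s) - P s * Q s).trace) := by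
      funext s; rw [Matrix.trace_sub]
    rw [heq] at h3
    refine h3.congr_deriv (Eq.symm ?_)
    set A := Ξ u; set S := Ψ u; set W := Δ (Ψ u); set D := Δ (Ξ u)
    set p := P u; set q := Q u
    have c1 := Matrix.trace_mul_cycle A W S
    have c2 := Matrix.trace_mul_cycle A D A
    have c3 := Matrix.trace_mul_cycle A q S
    have c4 := Matrix.trace_mul_cycle A p A
    have c5 := Matrix.trace_mul_cycle p q S
    have c6 := Matrix.trace_mul_cycle A q q
    have c7 := Matrix.trace_mul_cycle p A p
    simp only [Ring.lie_def, two_smul, sub_mul, mul_sub, add_mul, mul_add,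
      Matrix.trace_add, Matrix.trace_sub, ← mul_assoc] at *
    linear_combination -c1 + c2 - 2*c3 + 2*c4 + c5 + c6 + c7
  intro t
  have hd : Differentiable ℝ (fun s => (Ξ s * Δ (Ψ s) - P s * Q s).trace) :=
    fun u => (key u).differentiableAt
  exact is_const_of_deriv_eq_zero hd (fun u => (key u).deriv) t 0
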